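/- For any two-state mean field game, the cost coefficients are always potential: given continuous functions f^1, f^2 : S_2 → R, the function F(p_1, 1−p_1) := ∫_0^{p_1} (f^1(q,1−q) − f^2(q,1−q)) dq satisfies 𝔡_1 F(p) = (f^1(p) − f^2(p))/2 = −𝔡_2 F(p) for all p = (p_1, p_2) in the interior of S_2. -/

import Mathlib

open Set MeasureTheory intervalIntegral

/-- The two-state simplex `S_2 = {(p₁,p₂) ∈ ℝ₊² : p₁ + p₂ = 1}`. -/
def simplexTwo : Set (ℝ × ℝ) := {p | 0 ≤ p.1 ∧ 0 ≤ p.2 ∧ p.1 + p.2 = 1}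

/-- any two-state mean field game is potential.  Given continuous cost
coefficients `f¹, f²` on `S_2`, the potential
`F(p₁, 1−p₁) = ∫_0^{p₁} (f¹(q,1−q) − f²(q,1−q)) dq` satisfies
`𝔡₁F(p) = (f¹(p) − f²(p))/2 = −𝔡₂F(p)` on the interior of `S_2`, where the intrinsic
derivatives are `𝔡₁F(p) = d/dε F(p₁+ε/2, p₂−ε/2)|_{ε=0}` and
`𝔡₂F(p) = d/dε F(p₁−ε/2, p₂+ε/2)|_{ε=0}`. -/
theorem two_state_mfg_is_potential
    (f1 f2 : ℝ × ℝ → ℝ)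
    (hf1 : ContinuousOn f1 simplexTwo) (hf2 : ContinuousOn f2 simplexTwo)
    (F : ℝ × ℝ → ℝ)
    (hF : ∀ q : ℝ × ℝ, F q = ∫ s in (0:ℝ)..q.1, (f1 (s, 1 - s) - f2 (s, 1 - s)))
    (p : ℝ × ℝ) (hp : p ∈ simplexTwo) (hp1 : 0 < p.1) (hp2 : 0 < p.2) :
    deriv (fun ε : ℝ => F (p.1 + ε / 2, p.2 - ε / 2)) 0 = (f1 p - f2 p) / 2
    ∧ deriv (fun ε : ℝ => F (p.1 - ε / 2, p.2 + ε / 2)) 0 = -((f1 p - f2 p) / 2) := by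
  -- clamp to [0,1]
  set c : ℝ → ℝ := fun s => max 0 (min 1 s) with hc
  have hcc : Continuous c := continuous_const.max (continuous_const.min continuous_id)
  have hcmem : ∀ s, ((c s, 1 - c s) : ℝ × ℝ) ∈ simplexTwo := by
    intro s
    have h1 : c s ≤ 1 := max_le zero_le_one (min_le_left _ _)
    exact ⟨le_max_left _ _, by show (0:ℝ) ≤ 1 - c s; linarith, by show c s + (1 - c s) = 1; ring⟩
  have hceq : ∀ s, 0 ≤ s → s ≤ 1 → c s = s := by
    intro s h0 h1
    simp [hc, min_eq_right h1, max_eq_right h0]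
  set g : ℝ → ℝ := fun s => f1 (c s, 1 - c s) - f2 (c s, 1 - c s) with hg
  have hpath : Continuous fun s : ℝ => ((c s, 1 - c s) : ℝ × ℝ) :=
    hcc.prodMk (continuous_const.sub hcc)
  have hgc : Continuous g := by
    have h1 : Continuous fun s => f1 (c s, 1 - c s) :=
      hf1.comp_continuous hpath hcmem
    have h2 : Continuous fun s => f2 (c s, 1 - c s) :=
      hf2.comp_continuous hpath hcmem
    exact h1.sub h2
  obtain ⟨hp1', hp2', hsum⟩ := hp
  have hp1le : p.1 ≤ 1 := by linarith
  have hp2eq : p.2 = 1 - p.1 := by linarith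
  -- F on points with first coord in [0,1] equals integral of g
  have hFg : ∀ q : ℝ × ℝ, 0 ≤ q.1 → q.1 ≤ 1 → F q = ∫ s in (0:ℝ)..q.1, g s := by
    intro q h0 h1
    rw [hF q]
    apply intervalIntegral.integral_congr
    intro s hs
    rw [Set.uIcc_of_le h0] at hs
    have h0s : 0 ≤ s := hs.1
    have h1s : s ≤ 1 := le_trans hs.2 h1
    simp [hg, hceq s h0s h1s]
  have hgp : g p.1 = f1 p - f2 p := by
    show f1 (c p.1, 1 - c p.1) - f2 (c p.1, 1 - c p.1) = f1 p - f2 p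
    rw [hceq p.1 hp1' hp1le, ← hp2eq]
  -- derivative of the primitive
  have hprim : HasDerivAt (fun u => ∫ s in (0:ℝ)..u, g s) (g p.1) p.1 :=
    (hgc.integral_hasStrictDerivAt 0 p.1).hasDerivAt
  have key : ∀ k : ℝ,
      deriv (fun ε : ℝ => F (p.1 + ε * k, p.2 - ε * k)) 0 = g p.1 * k := by
    intro k
    have hinner : HasDerivAt (fun ε : ℝ => p.1 + ε * k) k 0 := by
      simpa using ((hasDerivAt_id (0:ℝ)).mul_const k).const_add p.1
    have hprim' : HasDerivAt (fun u => ∫ s in (0:ℝ)..u, g s) (g p.1) (p.1 + 0 * k) := by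
      simpa using hprim
    have hcomp : HasDerivAt (fun ε : ℝ => ∫ s in (0:ℝ)..(p.1 + ε * k), g s)
        (g p.1 * k) 0 := by
      have h := hprim'.comp 0 hinner
      exact h
    have heq : (fun ε : ℝ => F (p.1 + ε * k, p.2 - ε * k)) =ᶠ[nhds 0]
        fun ε : ℝ => ∫ s in (0:ℝ)..(p.1 + ε * k), g s := by
      have hball : ∀ ε : ℝ, |ε * k| < min p.1 p.2 →
          F (p.1 + ε * k, p.2 - ε * k) = ∫ s in (0:ℝ)..(p.1 + ε * k), g s := by
        intro ε hε
        have h1 : |ε * k| < p.1 := lt_of_lt_of_le hε (min_le_left _ _)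
        have h2 : |ε * k| < p.2 := lt_of_lt_of_le hε (min_le_right _ _)
        have ha := abs_lt.mp h1
        have hb := abs_lt.mp h2
        exact hFg _ (by simp; linarith) (by simp; linarith)
      have hcont : ContinuousAt (fun ε : ℝ => |ε * k|) 0 :=
        ((continuous_id.mul continuous_const).abs).continuousAt
      have : ∀ᶠ ε in nhds (0:ℝ), |ε * k| < min p.1 p.2 := by
        have h0 : |(0:ℝ) * k| < min p.1 p.2 := by
          simp [lt_min hp1 hp2]
        exact hcont.eventually_lt continuousAt_const h0
      filter_upwards [this] with ε hε using hball ε hε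
    rw [heq.deriv_eq, hcomp.deriv]
  constructor
  · have := key (1/2)
    simp only [mul_one_div] at this
    rw [show (fun ε : ℝ => F (p.1 + ε / 2, p.2 - ε / 2)) =
        fun ε : ℝ => F (p.1 + ε * (1/2), p.2 - ε * (1/2)) by
      funext ε; rw [mul_one_div]]
    rw [key (1/2), hgp]; ring
  · have : (fun ε : ℝ => F (p.1 - ε / 2, p.2 + ε / 2)) =
        fun ε : ℝ => F (p.1 + ε * (-(1/2)), p.2 - ε * (-(1/2))) := by
      funext ε; ring_nf
    rw [this, key (-(1/2)), hgp]; ring
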